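/- Suppose HᴴH ⪰ GᴴG (i.e., HᴴH − GᴴG is positive semidefinite). Then the secrecy rate function R is concave on the cone of Hermitian positive semidefinite matrices: for all Hermitian positive semidefinite n_t×n_t matrices Q_1, Q_2 and all t ∈ [0,1], R(t Q_1 + (1−t) Q_2) ≥ t R(Q_1) + (1−t) R(Q_2). -/

import Mathlib

open Matrix
open scoped ComplexOrder

namespace SecrecyAux

variable {n : Type*} [Fintype n] [DecidableEq n]

lemma psd_smul {Q : Matrix n n ℂ} (hQ : Q.PosSemidef) {c : ℝ} (hc : 0 ≤ c) :
    ((c : ℂ) • Q).PosSemidef := by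
  refine ⟨?_, fun x => ?_⟩
  · unfold Matrix.IsHermitian
    rw [conjTranspose_smul, hQ.1.eq]
    congr 1
    simp
  · exact (hQ.smul (a := (c : ℂ)) (by exact_mod_cast hc)).2 x

open scoped MatrixOrder in
/-- The positive-semidefinite square root (port of the removed Mathlib API). -/
noncomputable def _root_.Matrix.PosSemidef.sqrt {A : Matrix n n ℂ} (_hA : A.PosSemidef) :
    Matrix n n ℂ :=
  CFC.sqrt A

open scoped MatrixOrder in
lemma _root_.Matrix.PosSemidef.posSemidef_sqrt {A : Matrix n n ℂ} (hA : A.PosSemidef) :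
    hA.sqrt.PosSemidef :=
  (CFC.sqrt_nonneg A).posSemidef

open scoped MatrixOrder in
lemma _root_.Matrix.PosSemidef.sqrt_mul_self {A : Matrix n n ℂ} (hA : A.PosSemidef) :
    hA.sqrt * hA.sqrt = A :=
  CFC.sqrt_mul_sqrt_self A hA.nonneg

lemma posDef_of_posSemidef_det_ne_zero {M : Matrix n n ℂ} (h : M.PosSemidef)
    (hdet : IsUnit M.det) : M.PosDef := by
  rw [posDef_iff_dotProduct_mulVec]
  have h' := posSemidef_iff_dotProduct_mulVec.mp h
  refine ⟨h.1, fun x hx => lt_of_le_of_ne (h'.2 x) fun h0 => hx ?_⟩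
  have hMx : M *ᵥ x = 0 := (h.dotProduct_mulVec_zero_iff x).mp h0.symm
  have : M *ᵥ x = M *ᵥ 0 := by simpa using hMx
  exact Matrix.mulVec_injective_iff_isUnit.mpr ((Matrix.isUnit_iff_isUnit_det M).mpr hdet) this

lemma det_re_pos {M : Matrix n n ℂ} (hM : M.PosDef) : 0 < M.det.re :=
  (Complex.lt_def.mp hM.det_pos).1

lemma det_eq_ofReal {M : Matrix n n ℂ} (hM : M.PosDef) : M.det = (M.det.re : ℂ) := by
  have h := (Complex.lt_def.mp hM.det_pos).2
  exact Complex.ext rfl (by simpa using h.symm)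

/-- Determinant of `a•1 + b•N` for Hermitian `N` via eigenvalues. -/
lemma herm_affine_det {N : Matrix n n ℂ} (hN : N.IsHermitian) (a b : ℝ) :
    ((a : ℂ) • 1 + (b : ℂ) • N).det
      = ((∏ i, (a + b * hN.eigenvalues i) : ℝ) : ℂ) := by
  set U : Matrix n n ℂ := (hN.eigenvectorUnitary : Matrix n n ℂ) with hUdef
  have hU : U * star U = 1 := mem_unitaryGroup_iff.mp hN.eigenvectorUnitary.2
  have hU' : star U * U = 1 := mem_unitaryGroup_iff'.mp hN.eigenvectorUnitary.2
  have h1 : (1 : Matrix n n ℂ) = U * 1 * star U := by rw [Matrix.mul_one, hU]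
  have key : (a : ℂ) • 1 + (b : ℂ) • N
      = U * ((a : ℂ) • 1 + (b : ℂ) • diagonal (RCLike.ofReal ∘ hN.eigenvalues)) * star U := by
    conv_lhs => rw [h1, hN.spectral_theorem, Unitary.conjStarAlgAut_apply]
    rw [Matrix.mul_add, Matrix.add_mul]
    congr 1 <;> rw [Matrix.mul_smul, Matrix.smul_mul]
  rw [key, det_mul, det_mul, mul_comm, ← mul_assoc, ← det_mul, ← det_mul, hU', Matrix.one_mul]
  have : (a : ℂ) • (1 : Matrix n n ℂ) + (b : ℂ) • diagonal (RCLike.ofReal ∘ hN.eigenvalues)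
      = diagonal fun i => (a : ℂ) + (b : ℂ) * (hN.eigenvalues i : ℂ) := by
    rw [← diagonal_one, ← diagonal_smul, ← diagonal_smul, diagonal_add]
    congr 1
    funext i
    simp [smul_eq_mul]
  rw [this, det_diagonal]
  push_cast
  rfl

lemma posDef_one_add_psd {N : Matrix n n ℂ} (hN : N.PosSemidef) :
    ((1 : Matrix n n ℂ) + N).PosDef :=
  Matrix.PosDef.add_posSemidef Matrix.PosDef.one hN

lemma det_one_add_psd_eq {N : Matrix n n ℂ} (hN : N.PosSemidef) :
    ((1 : Matrix n n ℂ) + N).det = ((∏ i, (1 + hN.1.eigenvalues i) : ℝ) : ℂ) := by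
  have := herm_affine_det hN.1 1 1
  simpa using this

lemma det_one_add_psd_re_ge_one {N : Matrix n n ℂ} (hN : N.PosSemidef) :
    1 ≤ ((1 : Matrix n n ℂ) + N).det.re := by
  rw [det_one_add_psd_eq hN, Complex.ofReal_re]
  calc (1 : ℝ) = ∏ _i : n, 1 := by simp
    _ ≤ ∏ i, (1 + hN.1.eigenvalues i) := Finset.prod_le_prod (fun _ _ => zero_le_one)
        (fun i _ => by linarith [hN.eigenvalues_nonneg i])

lemma posDef_isUnit_det {M : Matrix n n ℂ} (hM : M.PosDef) : IsUnit M.det :=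
  (Matrix.isUnit_iff_isUnit_det M).mp hM.isUnit

/-- Congruence of a positive definite matrix by an invertible matrix is positive definite. -/
lemma posDef_conj {B M : Matrix n n ℂ} (hB : B.PosDef) (hM : IsUnit M.det) :
    (Mᴴ * B * M).PosDef := by
  refine posDef_of_posSemidef_det_ne_zero (hB.posSemidef.conjTranspose_mul_mul_same M) ?_
  rw [det_mul, det_mul, det_conjTranspose]
  exact (hM.star.mul (posDef_isUnit_det hB)).mul hM

/-- The positive-semidefinite square root of a positive definite matrix is positive definite. -/
lemma posDef_sqrt {A : Matrix n n ℂ} (hA : A.PosDef) : hA.posSemidef.sqrt.PosDef := by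
  refine posDef_of_posSemidef_det_ne_zero hA.posSemidef.posSemidef_sqrt ?_
  have h : hA.posSemidef.sqrt.det * hA.posSemidef.sqrt.det = A.det := by
    rw [← det_mul, hA.posSemidef.sqrt_mul_self]
  exact isUnit_of_mul_isUnit_left (h ▸ posDef_isUnit_det hA)

lemma posDef_mul_inv {M : Matrix n n ℂ} (hM : M.PosDef) : M * M⁻¹ = 1 :=
  Matrix.mul_nonsing_inv M (posDef_isUnit_det hM)

lemma posDef_inv_mul {M : Matrix n n ℂ} (hM : M.PosDef) : M⁻¹ * M = 1 :=
  Matrix.nonsing_inv_mul M (posDef_isUnit_det hM)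

/-- Monotonicity of the (real part of the) determinant: `det X ≤ det (X + Z)` for `X` posdef,
`Z` possemidef. -/
lemma det_re_mono {X Z : Matrix n n ℂ} (hX : X.PosDef) (hZ : Z.PosSemidef) :
    X.det.re ≤ (X + Z).det.re := by
  set L := hX.posSemidef.sqrt with hLdef
  have hL : L.PosDef := posDef_sqrt hX
  have hLL : L * L = X := hX.posSemidef.sqrt_mul_self
  set R := L⁻¹ with hRdef
  have hR : R.PosDef := hL.inv
  have hRherm : Rᴴ = R := hR.isHermitian.eq
  have hRZR : (R * Z * R).PosSemidef := by
    have := hZ.conjTranspose_mul_mul_same R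
    rwa [hRherm] at this
  have key : X + Z = L * (1 + R * Z * R) * L := by
    rw [Matrix.mul_add, Matrix.add_mul, Matrix.mul_one, hLL]
    congr 1
    rw [show L * (R * Z * R) * L = (L * R) * Z * (R * L) by simp only [Matrix.mul_assoc],
      posDef_mul_inv hL, posDef_inv_mul hL, Matrix.one_mul, Matrix.mul_one]
  have hdet : (X + Z).det = X.det * (1 + R * Z * R).det := by
    rw [key, det_mul, det_mul, ← hLL, det_mul]
    ring
  have e1 : X.det = (X.det.re : ℂ) := det_eq_ofReal hX
  have e2 : (1 + R * Z * R).det = ((∏ i, (1 + hRZR.1.eigenvalues i) : ℝ) : ℂ) :=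
    det_one_add_psd_eq hRZR
  have : (X + Z).det.re = X.det.re * (∏ i, (1 + hRZR.1.eigenvalues i)) := by
    conv_lhs => rw [hdet, e1, e2, ← Complex.ofReal_mul]
    rw [Complex.ofReal_re]
  rw [this]
  nth_rewrite 1 [← mul_one X.det.re]
  refine mul_le_mul_of_nonneg_left ?_ (det_re_pos hX).le
  have := det_one_add_psd_re_ge_one hRZR
  rwa [det_one_add_psd_eq hRZR, Complex.ofReal_re] at this

/-- Log-concavity of the determinant on positive definite matrices (rpow form). -/
lemma det_re_combo {A B : Matrix n n ℂ} (hA : A.PosDef) (hB : B.PosDef)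
    {t : ℝ} (h0 : 0 ≤ t) (h1 : t ≤ 1) :
    A.det.re ^ t * B.det.re ^ (1 - t) ≤ ((t : ℂ) • A + ((1 - t : ℝ) : ℂ) • B).det.re := by
  set L := hA.posSemidef.sqrt with hLdef
  have hL : L.PosDef := posDef_sqrt hA
  have hLL : L * L = A := hA.posSemidef.sqrt_mul_self
  set R := L⁻¹ with hRdef
  have hR : R.PosDef := hL.inv
  have hRherm : Rᴴ = R := hR.isHermitian.eq
  have hC : (R * B * R).PosDef := by
    have := posDef_conj hB (posDef_isUnit_det hR)
    rwa [hRherm] at this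
  set C := R * B * R with hCdef
  have key : (t : ℂ) • A + ((1 - t : ℝ) : ℂ) • B
      = L * ((t : ℂ) • 1 + ((1 - t : ℝ) : ℂ) • C) * L := by
    rw [Matrix.mul_add, Matrix.add_mul, Matrix.mul_smul, Matrix.mul_smul, Matrix.smul_mul,
      Matrix.smul_mul, Matrix.mul_one, hLL]
    congr 2
    rw [show L * (R * B * R) * L = (L * R) * B * (R * L) by simp only [Matrix.mul_assoc],
      posDef_mul_inv hL, posDef_inv_mul hL, Matrix.one_mul, Matrix.mul_one]
  -- determinant of C
  have hdetC : C.det = B.det * A.det⁻¹ := by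
    rw [hCdef, det_mul, det_mul, det_nonsing_inv, Ring.inverse_eq_inv', ← hLL, det_mul, mul_inv]
    ring
  have hA' : 0 < A.det.re := det_re_pos hA
  have hB' : 0 < B.det.re := det_re_pos hB
  have hC' : 0 < C.det.re := det_re_pos hC
  have hCre : C.det.re = B.det.re / A.det.re := by
    have : ((C.det.re : ℝ) : ℂ) = ((B.det.re / A.det.re : ℝ) : ℂ) := by
      rw [← det_eq_ofReal hC, hdetC, det_eq_ofReal hA, det_eq_ofReal hB, Complex.ofReal_div]
      rfl
    exact_mod_cast this
  -- eigenvalue inequality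
  have hdet2 : ((t : ℂ) • (1 : Matrix n n ℂ) + ((1 - t : ℝ) : ℂ) • C).det
      = ((∏ i, (t + (1 - t) * hC.isHermitian.eigenvalues i) : ℝ) : ℂ) :=
    herm_affine_det hC.isHermitian t (1 - t)
  have hprodge : (C.det.re) ^ (1 - t) ≤ ∏ i, (t + (1 - t) * hC.isHermitian.eigenvalues i) := by
    have hCre2 : C.det.re = ∏ i, hC.isHermitian.eigenvalues i := by
      have := hC.isHermitian.det_eq_prod_eigenvalues
      have : C.det = ((∏ i, hC.isHermitian.eigenvalues i : ℝ) : ℂ) := by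
        rw [this]; push_cast; rfl
      rw [this, Complex.ofReal_re]
    rw [hCre2, ← Real.finset_prod_rpow _ _ (fun i _ => ((hC.eigenvalues_pos i).le)) _]
    refine Finset.prod_le_prod (fun i _ => Real.rpow_nonneg (hC.eigenvalues_pos i).le _)
      (fun i _ => ?_)
    have := Real.geom_mean_le_arith_mean2_weighted h0 (by linarith : (0:ℝ) ≤ 1 - t)
      zero_le_one (hC.eigenvalues_pos i).le (by ring : t + (1 - t) = 1)
    simpa [Real.one_rpow] using this
  -- assemble
  have hre : ((t : ℂ) • A + ((1 - t : ℝ) : ℂ) • B).det.re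
      = A.det.re * (∏ i, (t + (1 - t) * hC.isHermitian.eigenvalues i)) := by
    rw [key, det_mul, det_mul]
    have : L.det * ((t : ℂ) • (1 : Matrix n n ℂ) + ((1 - t : ℝ) : ℂ) • C).det * L.det
        = A.det * ((t : ℂ) • (1 : Matrix n n ℂ) + ((1 - t : ℝ) : ℂ) • C).det := by
      rw [← hLL, det_mul]; ring
    conv_lhs => rw [this, det_eq_ofReal hA, hdet2, ← Complex.ofReal_mul]
    rw [Complex.ofReal_re]
  rw [hre]
  calc A.det.re ^ t * B.det.re ^ (1 - t)
      = A.det.re * (C.det.re) ^ (1 - t) := by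
        rw [hCre, Real.div_rpow hB'.le hA'.le]
        rw [show (t : ℝ) = 1 - (1 - t) by ring, Real.rpow_sub hA', Real.rpow_one]
        field_simp
        congr 1; ring
    _ ≤ A.det.re * (∏ i, (t + (1 - t) * hC.isHermitian.eigenvalues i)) := by
        exact mul_le_mul_of_nonneg_left hprodge hA'.le

lemma posDef_smul {Q : Matrix n n ℂ} (hQ : Q.PosDef) {c : ℝ} (hc : 0 < c) :
    ((c : ℂ) • Q).PosDef := by
  refine ⟨?_, fun x hx => ?_⟩
  · unfold Matrix.IsHermitian
    rw [conjTranspose_smul, hQ.1.eq]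
    congr 1
    simp
  · have hc' : (0 : ℂ) < (c : ℂ) := by
      rw [show (0 : ℂ) = ((0 : ℝ) : ℂ) by simp, Complex.real_lt_real]
      exact hc
    exact (hQ.smul hc').2 hx

lemma pd_combo {P₁ P₂ : Matrix n n ℂ} (h1 : P₁.PosDef) (h2 : P₂.PosDef)
    {a b : ℝ} (ha : 0 ≤ a) (hb : 0 ≤ b) (hab : a + b = 1) :
    ((a : ℂ) • P₁ + (b : ℂ) • P₂).PosDef := by
  rcases ha.lt_or_eq with ha' | ha'
  · exact Matrix.PosDef.add_posSemidef (posDef_smul h1 ha') (psd_smul h2.posSemidef hb)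
  · have hb1 : b = 1 := by linarith
    rw [← ha', hb1]
    simpa using h2

/-- Woodbury-type identity: `(Q⁻¹ + T)⁻¹ = Q - Q√T(1+√TQ√T)⁻¹√TQ`. -/
lemma woodbury {T Q : Matrix n n ℂ} (hT : T.PosSemidef) (hQ : Q.PosDef) :
    (Q⁻¹ + T)⁻¹
      = Q - Q * hT.sqrt * (1 + hT.sqrt * Q * hT.sqrt)⁻¹ * hT.sqrt * Q := by
  set s := hT.sqrt with hsdef
  have hs : s * s = T := hT.sqrt_mul_self
  have hsh : sᴴ = s := hT.posSemidef_sqrt.1.eq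
  have hsQs : (s * Q * s).PosSemidef := by
    have := hQ.posSemidef.conjTranspose_mul_mul_same s
    rwa [hsh] at this
  have hA : (1 + s * Q * s).PosDef := posDef_one_add_psd hsQs
  set X := (1 + s * Q * s)⁻¹ with hXdef
  have hX1 : (1 + s * Q * s) * X = 1 := posDef_mul_inv hA
  have key : X + s * Q * s * X = 1 := by
    rw [← hX1]
    noncomm_ring
  refine (Matrix.inv_eq_right_inv ?_)
  have hQQ' : Q⁻¹ * Q = 1 := posDef_inv_mul hQ
  have key2 : s * X * s * Q + s * s * Q * s * X * s * Q = s * s * Q := by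
    have h := congrArg (fun M : Matrix n n ℂ => s * M * (s * Q)) key
    simp only [Matrix.add_mul, Matrix.mul_add, Matrix.mul_one, Matrix.one_mul,
      ← Matrix.mul_assoc] at h
    convert h using 2 <;> simp only [Matrix.mul_assoc]
  rw [Matrix.add_mul, Matrix.mul_sub, Matrix.mul_sub]
  simp only [← Matrix.mul_assoc, ← hs]
  rw [hQQ']
  simp only [Matrix.one_mul]
  rw [show (1 : Matrix n n ℂ) - s * X * s * Q + (s * s * Q - s * s * Q * s * X * s * Q)
      = 1 + (s * s * Q - (s * X * s * Q + s * s * Q * s * X * s * Q)) by abel, key2]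
  simp

/-- Operator concavity of `Q ↦ (Q⁻¹ + T)⁻¹` on positive definite matrices,
via the Schur complement. -/
lemma schur_concave {T : Matrix n n ℂ} (hT : T.PosSemidef) {P₁ P₂ P : Matrix n n ℂ}
    (h1 : P₁.PosDef) (h2 : P₂.PosDef) (hP : P.PosDef)
    {a b : ℝ} (ha : 0 ≤ a) (hb : 0 ≤ b)
    (hPe : P = (a : ℂ) • P₁ + (b : ℂ) • P₂) (hab : (a : ℂ) + (b : ℂ) = 1) :
    ((P⁻¹ + T)⁻¹ - ((a : ℂ) • (P₁⁻¹ + T)⁻¹ + (b : ℂ) • (P₂⁻¹ + T)⁻¹)).PosSemidef := by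
  set s := hT.sqrt with hsdef
  have hs : s * s = T := hT.sqrt_mul_self
  have hsh : sᴴ = s := hT.posSemidef_sqrt.1.eq
  -- data for a PD matrix Q
  have hAQ : ∀ {Q : Matrix n n ℂ}, Q.PosDef → (1 + s * Q * s).PosDef := fun {Q} hQ => by
    refine posDef_one_add_psd ?_
    have := hQ.posSemidef.conjTranspose_mul_mul_same s
    rwa [hsh] at this
  have hBH : ∀ Q : Matrix n n ℂ, Q.IsHermitian → (s * Q)ᴴ = Q * s := fun Q hQ => by
    rw [conjTranspose_mul, hsh, hQ.eq]
  -- each block matrix is PSD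
  have hM : ∀ {Q : Matrix n n ℂ}, Q.PosDef →
      (fromBlocks (1 + s * Q * s) (s * Q) (Q * s)
        (Q * s * (1 + s * Q * s)⁻¹ * s * Q)).PosSemidef := fun {Q} hQ => by
    have hA := hAQ hQ
    haveI : Invertible (1 + s * Q * s) := Matrix.invertibleOfIsUnitDet _ (posDef_isUnit_det hA)
    rw [← hBH Q hQ.1]
    rw [Matrix.PosDef.fromBlocks₁₁ _ _ hA]
    rw [show (s * Q)ᴴ * (1 + s * Q * s)⁻¹ * s * Q = (s * Q)ᴴ * (1 + s * Q * s)⁻¹ * (s * Q) by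
      simp only [Matrix.mul_assoc]]
    simpa using Matrix.PosSemidef.zero
  -- convex combination of the block matrices
  have hsum := Matrix.PosSemidef.add (psd_smul (hM h1) ha) (psd_smul (hM h2) hb)
  have h1' : (a : ℂ) • (1 : Matrix n n ℂ) + (b : ℂ) • 1 = 1 := by
    rw [← add_smul, hab, one_smul]
  have hblocks : (a : ℂ) • (fromBlocks (1 + s * P₁ * s) (s * P₁) (P₁ * s)
        (P₁ * s * (1 + s * P₁ * s)⁻¹ * s * P₁))
      + (b : ℂ) • (fromBlocks (1 + s * P₂ * s) (s * P₂) (P₂ * s)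
        (P₂ * s * (1 + s * P₂ * s)⁻¹ * s * P₂))
      = fromBlocks (1 + s * P * s) (s * P) ((s * P)ᴴ)
        ((a : ℂ) • (P₁ * s * (1 + s * P₁ * s)⁻¹ * s * P₁)
          + (b : ℂ) • (P₂ * s * (1 + s * P₂ * s)⁻¹ * s * P₂)) := by
    rw [Matrix.fromBlocks_smul, Matrix.fromBlocks_smul, Matrix.fromBlocks_add]
    have e1 : (a : ℂ) • (1 + s * P₁ * s) + (b : ℂ) • (1 + s * P₂ * s) = 1 + s * P * s := by
      have : s * P * s = (a : ℂ) • (s * P₁ * s) + (b : ℂ) • (s * P₂ * s) := by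
        rw [hPe]
        simp only [Matrix.mul_add, Matrix.add_mul, Matrix.mul_smul, Matrix.smul_mul]
      conv_rhs => rw [this, ← h1']
      simp only [smul_add]
      abel
    have e2 : (a : ℂ) • (s * P₁) + (b : ℂ) • (s * P₂) = s * P := by
      rw [hPe, Matrix.mul_add, Matrix.mul_smul, Matrix.mul_smul]
    have e3 : (a : ℂ) • (P₁ * s) + (b : ℂ) • (P₂ * s) = (s * P)ᴴ := by
      rw [hBH P hP.1, hPe, Matrix.add_mul, Matrix.smul_mul, Matrix.smul_mul]
    rw [e1, e2, e3]
  rw [hblocks] at hsum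
  haveI : Invertible (1 + s * P * s) := Matrix.invertibleOfIsUnitDet _ (posDef_isUnit_det (hAQ hP))
  have hschur := (Matrix.PosDef.fromBlocks₁₁ (s * P) _ (hAQ hP)).mp hsum
  have hYP : (s * P)ᴴ * (1 + s * P * s)⁻¹ * (s * P) = P * s * (1 + s * P * s)⁻¹ * s * P := by
    rw [hBH P hP.1]
    simp only [Matrix.mul_assoc]
  have final : (P⁻¹ + T)⁻¹ - ((a : ℂ) • (P₁⁻¹ + T)⁻¹ + (b : ℂ) • (P₂⁻¹ + T)⁻¹)
      = ((a : ℂ) • (P₁ * s * (1 + s * P₁ * s)⁻¹ * s * P₁)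
          + (b : ℂ) • (P₂ * s * (1 + s * P₂ * s)⁻¹ * s * P₂))
        - (s * P)ᴴ * (1 + s * P * s)⁻¹ * (s * P) := by
    rw [woodbury hT hP, woodbury hT h1, woodbury hT h2, hYP]
    nth_rewrite 1 [hPe]
    simp only [smul_sub, smul_add]
    abel
  rw [final]
  exact hschur

/-- `det (1 + T·Q)` for `T, Q` PSD is a positive real. -/
lemma det_one_add_psd_mul {T Q : Matrix n n ℂ} (hT : T.PosSemidef) (hQ : Q.PosSemidef) :
    0 < (1 + T * Q).det.re ∧ (1 + T * Q).det = ((1 + T * Q).det.re : ℂ) := by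
  set q := hQ.sqrt with hqdef
  have hq : q * q = Q := hQ.sqrt_mul_self
  have hqh : qᴴ = q := hQ.posSemidef_sqrt.1.eq
  have he : (1 + T * Q).det = (1 + q * T * q).det := by
    calc (1 + T * Q).det = (1 + (T * q) * q).det := by rw [Matrix.mul_assoc, hq]
      _ = (1 + q * (T * q)).det := det_one_add_mul_comm _ _
      _ = (1 + q * T * q).det := by rw [Matrix.mul_assoc]
  have hpd : (1 + q * T * q).PosDef := by
    refine posDef_one_add_psd ?_
    have := hT.conjTranspose_mul_mul_same q
    rwa [hqh] at this
  refine ⟨by rw [he]; exact det_re_pos hpd, ?_⟩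
  conv_lhs => rw [he, det_eq_ofReal hpd]
  rw [he]

/-- Key determinant identity: `det(1 + (T+K)Q) = det(1 + TQ) · det(1 + √K (Q⁻¹+T)⁻¹ √K)`. -/
lemma det_identity {T K Q : Matrix n n ℂ} (hT : T.PosSemidef) (hK : K.PosSemidef)
    (hQ : Q.PosDef) :
    (1 + (T + K) * Q).det
      = (1 + T * Q).det * (1 + hK.sqrt * (Q⁻¹ + T)⁻¹ * hK.sqrt).det := by
  set k := hK.sqrt with hkdef
  have hk : k * k = K := hK.sqrt_mul_self
  have hWpd : (Q⁻¹ + T).PosDef := Matrix.PosDef.add_posSemidef hQ.inv hT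
  set W := (Q⁻¹ + T)⁻¹ with hWdef
  have hWQT : W * (Q⁻¹ + T) = 1 := posDef_inv_mul hWpd
  have hQdet : IsUnit Q.det := posDef_isUnit_det hQ
  -- det (1 + k W k) = det W * det (Q⁻¹ + (T + K))
  have e1 : (1 + k * W * k).det = W.det * (Q⁻¹ + (T + K)).det := by
    calc (1 + k * W * k).det = (1 + k * (W * k)).det := by rw [Matrix.mul_assoc]
      _ = (1 + (W * k) * k).det := det_one_add_mul_comm _ _
      _ = (1 + W * K).det := by rw [Matrix.mul_assoc, hk]
      _ = (W * (Q⁻¹ + (T + K))).det := by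
          congr 1
          rw [show Q⁻¹ + (T + K) = (Q⁻¹ + T) + K from (add_assoc _ _ _).symm, Matrix.mul_add,
            hWQT]
      _ = W.det * (Q⁻¹ + (T + K)).det := det_mul _ _
  -- det (Q⁻¹ + M) = Q.det⁻¹ * det (1 + M * Q) for any M
  have e2 : ∀ M : Matrix n n ℂ, (Q⁻¹ + M).det = Q.det⁻¹ * (1 + M * Q).det := by
    intro M
    have : Q⁻¹ + M = Q⁻¹ * (1 + Q * M) := by
      rw [Matrix.mul_add, Matrix.mul_one, ← Matrix.mul_assoc, posDef_inv_mul hQ, Matrix.one_mul]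
    rw [this, det_mul, det_nonsing_inv, Ring.inverse_eq_inv', det_one_add_mul_comm]
  have e3 : W.det = ((Q⁻¹ + T).det)⁻¹ := by
    rw [hWdef, det_nonsing_inv, Ring.inverse_eq_inv']
  have hdTQ : (1 + T * Q).det ≠ 0 := by
    have := (det_one_add_psd_mul hT hQ.posSemidef).1
    intro h
    rw [h] at this
    simp at this
  have hQd : Q.det ≠ 0 := hQdet.ne_zero
  rw [e1, e3, e2, e2]
  field_simp

/-- Main concavity inequality, positive definite case. -/
lemma main_pd {T K : Matrix n n ℂ} (hT : T.PosSemidef) (hK : K.PosSemidef)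
    {P₁ P₂ : Matrix n n ℂ} (h1 : P₁.PosDef) (h2 : P₂.PosDef)
    {t : ℝ} (h0 : 0 ≤ t) (h1t : t ≤ 1) :
    t * (Real.log (1 + (T + K) * P₁).det.re - Real.log (1 + T * P₁).det.re)
      + (1 - t) * (Real.log (1 + (T + K) * P₂).det.re - Real.log (1 + T * P₂).det.re)
    ≤ Real.log (1 + (T + K) * ((t : ℂ) • P₁ + ((1 - t : ℝ) : ℂ) • P₂)).det.re
      - Real.log (1 + T * ((t : ℂ) • P₁ + ((1 - t : ℝ) : ℂ) • P₂)).det.re := by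
  have hcast : (t : ℂ) + ((1 - t : ℝ) : ℂ) = 1 := by push_cast; ring
  set P := (t : ℂ) • P₁ + ((1 - t : ℝ) : ℂ) • P₂ with hPdef
  have hP : P.PosDef := pd_combo h1 h2 h0 (by linarith) (by ring)
  set k := hK.sqrt with hkdef
  have hkh : kᴴ = k := hK.posSemidef_sqrt.1.eq
  have hTK : (T + K).PosSemidef := Matrix.PosSemidef.add hT hK
  -- the three W matrices
  have hW1 : ((P₁⁻¹ + T)⁻¹).PosDef := (Matrix.PosDef.add_posSemidef h1.inv hT).inv
  have hW2 : ((P₂⁻¹ + T)⁻¹).PosDef := (Matrix.PosDef.add_posSemidef h2.inv hT).inv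
  have hWP : ((P⁻¹ + T)⁻¹).PosDef := (Matrix.PosDef.add_posSemidef hP.inv hT).inv
  have hMpsd : ∀ {W : Matrix n n ℂ}, W.PosDef → (k * W * k).PosSemidef := fun {W} hW => by
    have := hW.posSemidef.conjTranspose_mul_mul_same k
    rwa [hkh] at this
  have hRpd : ∀ {W : Matrix n n ℂ}, W.PosDef → ((1 : Matrix n n ℂ) + k * W * k).PosDef :=
    fun {W} hW => posDef_one_add_psd (hMpsd hW)
  -- real ratio equation:  dS(Q) = dT(Q) * r(Q)
  have hratio : ∀ {Q : Matrix n n ℂ}, (hQ : Q.PosDef) →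
      (1 + (T + K) * Q).det.re
        = (1 + T * Q).det.re * (1 + k * (Q⁻¹ + T)⁻¹ * k).det.re := fun {Q} hQ => by
    have hWQ : ((Q⁻¹ + T)⁻¹).PosDef := (Matrix.PosDef.add_posSemidef hQ.inv hT).inv
    have hc : (1 + (T + K) * Q).det
        = (((1 + T * Q).det.re * (1 + k * (Q⁻¹ + T)⁻¹ * k).det.re : ℝ) : ℂ) := by
      rw [det_identity hT hK hQ, Complex.ofReal_mul]
      congr 1
      · exact (det_one_add_psd_mul hT hQ.posSemidef).2
      · exact det_eq_ofReal (hRpd hWQ)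
    exact_mod_cast ((det_one_add_psd_mul hTK hQ.posSemidef).2.symm.trans hc)
  -- positivity of everything
  have hr1 : 0 < (1 + k * (P₁⁻¹ + T)⁻¹ * k).det.re := det_re_pos (hRpd hW1)
  have hr2 : 0 < (1 + k * (P₂⁻¹ + T)⁻¹ * k).det.re := det_re_pos (hRpd hW2)
  have hrP : 0 < (1 + k * (P⁻¹ + T)⁻¹ * k).det.re := det_re_pos (hRpd hWP)
  have hdT1 : 0 < (1 + T * P₁).det.re := (det_one_add_psd_mul hT h1.posSemidef).1
  have hdT2 : 0 < (1 + T * P₂).det.re := (det_one_add_psd_mul hT h2.posSemidef).1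
  have hdTP : 0 < (1 + T * P).det.re := (det_one_add_psd_mul hT hP.posSemidef).1
  -- concavity chain
  have hconc := schur_concave hT h1 h2 hP h0 (by linarith) hPdef hcast
  have hZ : (k * ((P⁻¹ + T)⁻¹
      - ((t : ℂ) • (P₁⁻¹ + T)⁻¹ + ((1 - t : ℝ) : ℂ) • (P₂⁻¹ + T)⁻¹)) * k).PosSemidef := by
    have := hconc.conjTranspose_mul_mul_same k
    rwa [hkh] at this
  have hXpd : ((1 : Matrix n n ℂ)
      + ((t : ℂ) • (k * (P₁⁻¹ + T)⁻¹ * k) + ((1 - t : ℝ) : ℂ) • (k * (P₂⁻¹ + T)⁻¹ * k))).PosDef :=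
    posDef_one_add_psd (Matrix.PosSemidef.add (psd_smul (hMpsd hW1) h0)
      (psd_smul (hMpsd hW2) (by linarith)))
  have hXZ : (1 : Matrix n n ℂ)
        + ((t : ℂ) • (k * (P₁⁻¹ + T)⁻¹ * k) + ((1 - t : ℝ) : ℂ) • (k * (P₂⁻¹ + T)⁻¹ * k))
        + (k * ((P⁻¹ + T)⁻¹
          - ((t : ℂ) • (P₁⁻¹ + T)⁻¹ + ((1 - t : ℝ) : ℂ) • (P₂⁻¹ + T)⁻¹)) * k)
      = 1 + k * (P⁻¹ + T)⁻¹ * k := by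
    simp only [Matrix.mul_sub, Matrix.sub_mul, Matrix.mul_add, Matrix.add_mul,
      Matrix.mul_smul, Matrix.smul_mul]
    abel
  have hmono : ((1 : Matrix n n ℂ)
        + ((t : ℂ) • (k * (P₁⁻¹ + T)⁻¹ * k) + ((1 - t : ℝ) : ℂ) • (k * (P₂⁻¹ + T)⁻¹ * k))).det.re
      ≤ (1 + k * (P⁻¹ + T)⁻¹ * k).det.re := by
    rw [← hXZ]
    exact det_re_mono hXpd hZ
  have hcombo : (t : ℂ) • ((1 : Matrix n n ℂ) + k * (P₁⁻¹ + T)⁻¹ * k)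
        + ((1 - t : ℝ) : ℂ) • ((1 : Matrix n n ℂ) + k * (P₂⁻¹ + T)⁻¹ * k)
      = (1 : Matrix n n ℂ)
        + ((t : ℂ) • (k * (P₁⁻¹ + T)⁻¹ * k) + ((1 - t : ℝ) : ℂ) • (k * (P₂⁻¹ + T)⁻¹ * k)) := by
    have h1' : (t : ℂ) • (1 : Matrix n n ℂ) + ((1 - t : ℝ) : ℂ) • (1 : Matrix n n ℂ) = 1 := by
      rw [← add_smul, hcast, one_smul]
    conv_rhs => rw [← h1']
    simp only [smul_add]
    abel
  have hcomb := det_re_combo (hRpd hW1) (hRpd hW2) h0 h1t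
  rw [hcombo] at hcomb
  -- r(P) ≥ r(P₁)^t * r(P₂)^(1-t)
  have hfinal : (1 + k * (P₁⁻¹ + T)⁻¹ * k).det.re ^ t
        * (1 + k * (P₂⁻¹ + T)⁻¹ * k).det.re ^ (1 - t)
      ≤ (1 + k * (P⁻¹ + T)⁻¹ * k).det.re := le_trans hcomb hmono
  -- take logs
  have hlog : t * Real.log (1 + k * (P₁⁻¹ + T)⁻¹ * k).det.re
        + (1 - t) * Real.log (1 + k * (P₂⁻¹ + T)⁻¹ * k).det.re
      ≤ Real.log (1 + k * (P⁻¹ + T)⁻¹ * k).det.re := by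
    have hposl : 0 < (1 + k * (P₁⁻¹ + T)⁻¹ * k).det.re ^ t
        * (1 + k * (P₂⁻¹ + T)⁻¹ * k).det.re ^ (1 - t) :=
      mul_pos (Real.rpow_pos_of_pos hr1 _) (Real.rpow_pos_of_pos hr2 _)
    have := Real.log_le_log hposl hfinal
    rwa [Real.log_mul (Real.rpow_pos_of_pos hr1 _).ne' (Real.rpow_pos_of_pos hr2 _).ne',
      Real.log_rpow hr1, Real.log_rpow hr2] at this
  -- convert everything with the ratio identity
  have hl1 : Real.log (1 + (T + K) * P₁).det.re
      = Real.log (1 + T * P₁).det.re + Real.log (1 + k * (P₁⁻¹ + T)⁻¹ * k).det.re := by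
    rw [hratio h1, Real.log_mul hdT1.ne' hr1.ne']
  have hl2 : Real.log (1 + (T + K) * P₂).det.re
      = Real.log (1 + T * P₂).det.re + Real.log (1 + k * (P₂⁻¹ + T)⁻¹ * k).det.re := by
    rw [hratio h2, Real.log_mul hdT2.ne' hr2.ne']
  have hlP : Real.log (1 + (T + K) * P).det.re
      = Real.log (1 + T * P).det.re + Real.log (1 + k * (P⁻¹ + T)⁻¹ * k).det.re := by
    rw [hratio hP, Real.log_mul hdTP.ne' hrP.ne']
  rw [hl1, hl2, hlP]
  ring_nf
  ring_nf at hlog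
  linarith

end SecrecyAux

open SecrecyAux

/-- The secrecy rate `R(Q) = log det(I + H Q Hᴴ) − log det(I + G Q Gᴴ)`. -/
noncomputable def secrecyRate {nr ne nt : ℕ}
    (H : Matrix (Fin nr) (Fin nt) ℂ) (G : Matrix (Fin ne) (Fin nt) ℂ)
    (Q : Matrix (Fin nt) (Fin nt) ℂ) : ℝ :=
  Real.log ((1 + H * Q * Hᴴ).det.re) - Real.log ((1 + G * Q * Gᴴ).det.re)

namespace SecrecyAux

lemma sec_tendsto {nr ne nt : ℕ}
    (H : Matrix (Fin nr) (Fin nt) ℂ) (G : Matrix (Fin ne) (Fin nt) ℂ)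
    {Q : Matrix (Fin nt) (Fin nt) ℂ} (hQ : Q.PosSemidef) :
    Filter.Tendsto (fun ε : ℝ => secrecyRate H G (Q + (ε : ℂ) • 1)) (nhds 0)
      (nhds (secrecyRate H G Q)) := by
  have h00 : Q + ((0 : ℝ) : ℂ) • (1 : Matrix (Fin nt) (Fin nt) ℂ) = Q := by simp
  have hc : ∀ {m : ℕ} (M : Matrix (Fin m) (Fin nt) ℂ),
      Continuous (fun ε : ℝ => (1 + M * (Q + (ε : ℂ) • 1) * Mᴴ).det.re) := fun M => by
    refine Complex.continuous_re.comp (Continuous.matrix_det ?_)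
    exact continuous_const.add ((continuous_const.matrix_mul
      (continuous_const.add (Complex.continuous_ofReal.smul continuous_const))).matrix_mul
      continuous_const)
  have hpos : ∀ {m : ℕ} (M : Matrix (Fin m) (Fin nt) ℂ),
      0 < (1 + M * Q * Mᴴ).det.re := fun M =>
    det_re_pos (posDef_one_add_psd (hQ.mul_mul_conjTranspose_same M))
  have hca : ContinuousAt (fun ε : ℝ => secrecyRate H G (Q + (ε : ℂ) • 1)) 0 := by
    unfold secrecyRate
    refine ContinuousAt.sub ?_ ?_
    · refine (Real.continuousAt_log ?_).comp (hc H).continuousAt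
      simp only [h00]
      exact (hpos H).ne'
    · refine (Real.continuousAt_log ?_).comp (hc G).continuousAt
      simp only [h00]
      exact (hpos G).ne'
  have hval : secrecyRate H G (Q + ((0 : ℝ) : ℂ) • 1) = secrecyRate H G Q := by rw [h00]
  simpa [ContinuousAt, hval] using hca

end SecrecyAux

open Matrix
open scoped ComplexOrder

/-- If `HᴴH ⪰ GᴴG`, the secrecy rate is concave on the PSD cone. -/
theorem stmt9 {nr ne nt : ℕ}
    (H : Matrix (Fin nr) (Fin nt) ℂ) (G : Matrix (Fin ne) (Fin nt) ℂ)
    (hHG : (Hᴴ * H - Gᴴ * G).PosSemidef) :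
    ∀ Q₁ Q₂ : Matrix (Fin nt) (Fin nt) ℂ, Q₁.PosSemidef → Q₂.PosSemidef →
      ∀ t : ℝ, 0 ≤ t → t ≤ 1 →
      t * secrecyRate H G Q₁ + (1 - t) * secrecyRate H G Q₂
        ≤ secrecyRate H G ((t : ℂ) • Q₁ + ((1 - t : ℝ) : ℂ) • Q₂) := by
  intro Q₁ Q₂ hQ1 hQ2 t ht0 ht1
  set T : Matrix (Fin nt) (Fin nt) ℂ := Gᴴ * G with hTdef
  set K : Matrix (Fin nt) (Fin nt) ℂ := Hᴴ * H - Gᴴ * G with hKdef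
  have hT : T.PosSemidef := posSemidef_conjTranspose_mul_self G
  have hK : K.PosSemidef := hHG
  have hTK : T + K = Hᴴ * H := by rw [hTdef, hKdef]; abel
  have hsec : ∀ Q : Matrix (Fin nt) (Fin nt) ℂ, secrecyRate H G Q
      = Real.log (1 + (T + K) * Q).det.re - Real.log (1 + T * Q).det.re := by
    intro Q
    unfold secrecyRate
    have e1 : (1 + H * Q * Hᴴ).det = (1 + (T + K) * Q).det := by
      rw [hTK, det_one_add_mul_comm, ← Matrix.mul_assoc]
    have e2 : (1 + G * Q * Gᴴ).det = (1 + T * Q).det := by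
      rw [hTdef, det_one_add_mul_comm, ← Matrix.mul_assoc]
    rw [e1, e2]
  set Qc : Matrix (Fin nt) (Fin nt) ℂ := (t : ℂ) • Q₁ + ((1 - t : ℝ) : ℂ) • Q₂ with hQcdef
  have hcast : (t : ℂ) + ((1 - t : ℝ) : ℂ) = 1 := by push_cast; ring
  -- the inequality for the shifted (positive definite) matrices
  have key : ∀ ε : ℝ, ε ∈ Set.Ioi (0 : ℝ) →
      t * secrecyRate H G (Q₁ + (ε : ℂ) • 1) + (1 - t) * secrecyRate H G (Q₂ + (ε : ℂ) • 1)
        ≤ secrecyRate H G (Qc + (ε : ℂ) • 1) := by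
    intro ε hε
    have hε' : (0 : ℝ) < ε := hε
    have hone : ((ε : ℂ) • (1 : Matrix (Fin nt) (Fin nt) ℂ)).PosDef :=
      posDef_smul Matrix.PosDef.one hε'
    have hP1 : (Q₁ + (ε : ℂ) • 1).PosDef := Matrix.PosDef.posSemidef_add hQ1 hone
    have hP2 : (Q₂ + (ε : ℂ) • 1).PosDef := Matrix.PosDef.posSemidef_add hQ2 hone
    have hmain := main_pd hT hK hP1 hP2 ht0 ht1
    have hcombo : (t : ℂ) • (Q₁ + (ε : ℂ) • 1) + ((1 - t : ℝ) : ℂ) • (Q₂ + (ε : ℂ) • 1)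
        = Qc + (ε : ℂ) • 1 := by
      rw [hQcdef]
      simp only [smul_add, smul_smul]
      rw [show ((ε : ℂ)) • (1 : Matrix (Fin nt) (Fin nt) ℂ)
          = ((t : ℂ) * (ε : ℂ)) • (1 : Matrix (Fin nt) (Fin nt) ℂ)
            + (((1 - t : ℝ) : ℂ) * (ε : ℂ)) • (1 : Matrix (Fin nt) (Fin nt) ℂ) by
        rw [← add_smul, ← add_mul, hcast, one_mul]]
      abel
    rw [hcombo] at hmain
    rw [hsec, hsec, hsec]
    exact hmain
  -- pass to the limit ε → 0⁺
  have t1 := (sec_tendsto H G hQ1).mono_left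
    (nhdsWithin_le_nhds : nhdsWithin (0 : ℝ) (Set.Ioi 0) ≤ nhds 0)
  have t2 := (sec_tendsto H G hQ2).mono_left
    (nhdsWithin_le_nhds : nhdsWithin (0 : ℝ) (Set.Ioi 0) ≤ nhds 0)
  have tc := (sec_tendsto H G (Matrix.PosSemidef.add (psd_smul hQ1 ht0)
      (psd_smul hQ2 (c := (1 - t : ℝ)) (by linarith)))).mono_left
    (nhdsWithin_le_nhds : nhdsWithin (0 : ℝ) (Set.Ioi 0) ≤ nhds 0)
  have tlhs : Filter.Tendsto
      (fun ε : ℝ => t * secrecyRate H G (Q₁ + (ε : ℂ) • 1)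
        + (1 - t) * secrecyRate H G (Q₂ + (ε : ℂ) • 1))
      (nhdsWithin 0 (Set.Ioi 0))
      (nhds (t * secrecyRate H G Q₁ + (1 - t) * secrecyRate H G Q₂)) :=
    ((t1.const_mul t).add (t2.const_mul (1 - t)))
  exact le_of_tendsto_of_tendsto tlhs tc
    (Filter.eventually_of_mem self_mem_nhdsWithin key)
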